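/- Let ξ₁,…,ξₙ be independent mean-zero random vectors in ℝ^d with finite fourth moments, W := Σ_{u=1}^n ξ_u, Σ_W := Var(W), and for each i set W^{(i)} := W − ξᵢ. Then Σ_{i=1}^n E[|ξᵢ · W^{(i)}|³] ≤ ‖Σ_W‖_{H.S.} Σ_{i=1}^n E[|ξᵢ|⁴] + √3 Σ_{i=1}^n E[(ξᵢᵀ Σ_W ξᵢ)^{3/2}]. -/

import Mathlib

open MeasureTheory ProbabilityTheory Real Matrix Filter
open scoped ENNReal NNReal Topology RealInnerProductSpace

noncomputable section

namespace Paper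

/-- `Ψ(x) = x (|log x| ∨ 1)`. -/
def Psi (x : ℝ) : ℝ := x * max |Real.log x| 1

/-- Hilbert–Schmidt (Frobenius) norm of a matrix. -/
def hsNorm {d : ℕ} (M : Matrix (Fin d) (Fin d) ℝ) : ℝ :=
  Real.sqrt (∑ j, ∑ k, M j k ^ 2)

/-- Operator norm of a matrix, acting on Euclidean space. -/
def opNorm {d : ℕ} (M : Matrix (Fin d) (Fin d) ℝ) : ℝ :=
  ‖LinearMap.toContinuousLinearMap (Matrix.toEuclideanLin M)‖

/-- Multiplication of a Euclidean vector by a matrix. -/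
def mulVecE {d : ℕ} (M : Matrix (Fin d) (Fin d) ℝ) (x : EuclideanSpace ℝ (Fin d)) :
    EuclideanSpace ℝ (Fin d) :=
  (WithLp.equiv 2 (Fin d → ℝ)).symm (M.mulVec ((WithLp.equiv 2 (Fin d → ℝ)) x))

/-- Covariance matrix of a random vector. -/
def covMatrix {d : ℕ} {Ω : Type*} [MeasurableSpace Ω] (μ : Measure Ω)
    (Y : Ω → EuclideanSpace ℝ (Fin d)) : Matrix (Fin d) (Fin d) ℝ :=
  Matrix.of fun j k =>
    (∫ ω, Y ω j * Y ω k ∂μ) - (∫ ω, Y ω j ∂μ) * (∫ ω, Y ω k ∂μ)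

/-- The standard Gaussian distribution `N(0, I_d)` on `ℝ^d`. -/
def stdGaussian (d : ℕ) : Measure (EuclideanSpace ℝ (Fin d)) :=
  (Measure.pi fun _ : Fin d => gaussianReal 0 1).map
    (WithLp.equiv 2 (Fin d → ℝ)).symm

/-- The centered Gaussian distribution `N(0, S)` on `ℝ^d` for a positive semidefinite `S`,
realized as the pushforward of the standard Gaussian by the square root of `S`. -/
def gaussianOf {d : ℕ} {S : Matrix (Fin d) (Fin d) ℝ} (hS : S.PosSemidef) :
    Measure (EuclideanSpace ℝ (Fin d)) :=
  (stdGaussian d).map (mulVecE (hS.1.eigenvectorUnitary.1 *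
    diagonal ((↑) ∘ (√·) ∘ hS.1.eigenvalues) * (star hS.1.eigenvectorUnitary : Matrix (Fin d) (Fin d) ℝ)))

/-- The largest eigenvalue of a symmetric matrix. -/
def lambdaMax {d : ℕ} {A : Matrix (Fin d) (Fin d) ℝ} (hA : A.IsHermitian) : ℝ :=
  ⨆ i, hA.eigenvalues i

/-- `Λ₁(A) = √(∑_{j=1}^d λ_j(A)²)` for the eigenvalues `λ₁(A) ≥ ⋯ ≥ λ_d(A)`. -/
def Lambda1 {d : ℕ} {A : Matrix (Fin d) (Fin d) ℝ} (hA : A.IsHermitian) : ℝ :=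
  Real.sqrt (∑ i, hA.eigenvalues i ^ 2)

/-- `Λ₂(A) = √(∑_{j=2}^d λ_j(A)²)` for the eigenvalues `λ₁(A) ≥ ⋯ ≥ λ_d(A)`. -/
def Lambda2 {d : ℕ} {A : Matrix (Fin d) (Fin d) ℝ} (hA : A.IsHermitian) : ℝ :=
  Real.sqrt ((∑ i, hA.eigenvalues i ^ 2) - lambdaMax hA ^ 2)

/-- `κ(A) = (Λ₁(A) Λ₂(A))^{-1/2}`. -/
def kappa {d : ℕ} {A : Matrix (Fin d) (Fin d) ℝ} (hA : A.IsHermitian) : ℝ :=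
  (Lambda1 hA * Lambda2 hA) ^ (-(1 : ℝ) / 2)

section Helpers

section ProbHelpers
variable {Ω : Type} [MeasurableSpace Ω] {μ : Measure Ω} [IsProbabilityMeasure μ]

lemma abs_pow_le_one_add_pow_four (s : ℝ) {a : ℕ} (ha : a ≤ 4) : |s| ^ a ≤ 1 + s ^ 4 := by
  have h4 : |s| ^ 4 = s ^ 4 := by
    rw [← abs_pow, abs_of_nonneg (by positivity)]
  rcases le_or_gt |s| 1 with h | h
  · have : |s| ^ a ≤ 1 := pow_le_one₀ (abs_nonneg s) h
    nlinarith [pow_nonneg (abs_nonneg s) 4, h4]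
  · have : |s| ^ a ≤ |s| ^ 4 := pow_le_pow_right₀ h.le ha
    nlinarith

lemma integrable_pow_of_four {T : Ω → ℝ} (hm : AEStronglyMeasurable T μ)
    (h4 : Integrable (fun ω => T ω ^ 4) μ) {a : ℕ} (ha : a ≤ 4) :
    Integrable (fun ω => T ω ^ a) μ := by
  refine Integrable.mono' ((integrable_const 1).add h4) (hm.pow a) ?_
  filter_upwards with ω
  have := abs_pow_le_one_add_pow_four (T ω) ha
  simpa [Real.norm_eq_abs, abs_pow] using this

lemma moments_sum {n : ℕ} {T : Fin n → Ω → ℝ} (hmeas : ∀ i, Measurable (T i))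
    (hindep : iIndepFun T μ)
    (hmean : ∀ i, ∫ ω, T i ω ∂μ = 0)
    (h4 : ∀ i, Integrable (fun ω => T i ω ^ 4) μ) (s : Finset (Fin n)) :
    Integrable (fun ω => (∑ u ∈ s, T u ω) ^ 4) μ ∧
    (∫ ω, (∑ u ∈ s, T u ω) ∂μ) = 0 ∧
    (∫ ω, (∑ u ∈ s, T u ω) ^ 2 ∂μ) = ∑ u ∈ s, ∫ ω, T u ω ^ 2 ∂μ ∧
    (∫ ω, (∑ u ∈ s, T u ω) ^ 4 ∂μ) ≤
      3 * (∑ u ∈ s, ∫ ω, T u ω ^ 2 ∂μ) ^ 2 + ∑ u ∈ s, ∫ ω, T u ω ^ 4 ∂μ := by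
  classical
  induction' s using Finset.induction_on with j s hj ih
  · refine ⟨by simp, by simp, by simp, by simp⟩
  · obtain ⟨iS4, hS0, hS2, hS4⟩ := ih
    set S : Ω → ℝ := fun ω => ∑ u ∈ s, T u ω with hSdef
    have hSmeas : Measurable S := by
      apply Finset.measurable_sum
      exact fun u _ => hmeas u
    have hSsm : AEStronglyMeasurable S μ := hSmeas.aestronglyMeasurable
    have hTsm : AEStronglyMeasurable (T j) μ := (hmeas j).aestronglyMeasurable
    -- independence of S and T j
    have hST : IndepFun S (T j) μ := by
      have := hindep.indepFun_finset_sum_of_notMem hmeas hj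
      have he : (∑ u ∈ s, T u) = S := by
        funext ω; simp [hSdef, Finset.sum_apply]
      rwa [he] at this
    -- integrability of powers
    have iS : ∀ a : ℕ, a ≤ 4 → Integrable (fun ω => S ω ^ a) μ := fun a ha =>
      integrable_pow_of_four hSsm iS4 ha
    have iT : ∀ a : ℕ, a ≤ 4 → Integrable (fun ω => T j ω ^ a) μ := fun a ha =>
      integrable_pow_of_four hTsm (h4 j) ha
    -- independence of powers and product moments
    have hSTpow : ∀ a b : ℕ, IndepFun (fun ω => S ω ^ a) (fun ω => T j ω ^ b) μ := fun a b =>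
      hST.comp (measurable_id.pow_const a) (measurable_id.pow_const b)
    have iMul : ∀ a b : ℕ, a ≤ 4 → b ≤ 4 → Integrable (fun ω => S ω ^ a * T j ω ^ b) μ := by
      intro a b ha hb
      exact (hSTpow a b).integrable_mul (iS a ha) (iT b hb)
    have hprod : ∀ a b : ℕ, a ≤ 4 → b ≤ 4 →
        (∫ ω, S ω ^ a * T j ω ^ b ∂μ) = (∫ ω, S ω ^ a ∂μ) * ∫ ω, T j ω ^ b ∂μ := by
      intro a b ha hb
      exact (hSTpow a b).integral_fun_mul_eq_mul_integral ((iS a ha).aestronglyMeasurable)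
        ((iT b hb).aestronglyMeasurable)
    -- mean of T j and S
    have hTm : (∫ ω, T j ω ∂μ) = 0 := hmean j
    have hSm : (∫ ω, S ω ∂μ) = 0 := hS0
    have hsum : ∀ ω, (∑ u ∈ insert j s, T u ω) = S ω + T j ω := by
      intro ω; rw [Finset.sum_insert hj]; ring
    -- nonnegativity
    have hT2nn : 0 ≤ ∫ ω, T j ω ^ 2 ∂μ := integral_nonneg fun ω => by positivity
    have hS2nn : 0 ≤ ∑ u ∈ s, ∫ ω, T u ω ^ 2 ∂μ :=
      Finset.sum_nonneg fun u _ => integral_nonneg fun ω => by positivity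
    -- expansion of the 4th power
    have hexp4 : (fun ω => (∑ u ∈ insert j s, T u ω) ^ 4) =
        fun ω => S ω ^ 4 + (4 * (S ω ^ 3 * T j ω ^ 1) + (6 * (S ω ^ 2 * T j ω ^ 2) +
          (4 * (S ω ^ 1 * T j ω ^ 3) + T j ω ^ 4))) := by
      funext ω; rw [hsum ω]; ring
    have hexp2 : (fun ω => (∑ u ∈ insert j s, T u ω) ^ 2) =
        fun ω => S ω ^ 2 + (2 * (S ω ^ 1 * T j ω ^ 1) + T j ω ^ 2) := by
      funext ω; rw [hsum ω]; ring
    have int4 : Integrable (fun ω => (∑ u ∈ insert j s, T u ω) ^ 4) μ := by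
      rw [hexp4]
      exact (iS 4 le_rfl).add (((iMul 3 1 (by norm_num) (by norm_num)).const_mul 4).add
        (((iMul 2 2 (by norm_num) (by norm_num)).const_mul 6).add
        (((iMul 1 3 (by norm_num) (by norm_num)).const_mul 4).add (iT 4 le_rfl))))
    have i31 : Integrable (fun ω => 4 * (S ω ^ 3 * T j ω ^ 1)) μ :=
      (iMul 3 1 (by norm_num) (by norm_num)).const_mul 4
    have i22 : Integrable (fun ω => 6 * (S ω ^ 2 * T j ω ^ 2)) μ :=
      (iMul 2 2 (by norm_num) (by norm_num)).const_mul 6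
    have i13 : Integrable (fun ω => 4 * (S ω ^ 1 * T j ω ^ 3)) μ :=
      (iMul 1 3 (by norm_num) (by norm_num)).const_mul 4
    have i11 : Integrable (fun ω => 2 * (S ω ^ 1 * T j ω ^ 1)) μ :=
      (iMul 1 1 (by norm_num) (by norm_num)).const_mul 2
    have a2 : Integrable (fun ω => 4 * (S ω ^ 1 * T j ω ^ 3) + T j ω ^ 4) μ := by
      exact i13.add (iT 4 le_rfl)
    have a3 : Integrable (fun ω => 6 * (S ω ^ 2 * T j ω ^ 2) +
        (4 * (S ω ^ 1 * T j ω ^ 3) + T j ω ^ 4)) μ := by exact i22.add a2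
    have a4 : Integrable (fun ω => 4 * (S ω ^ 3 * T j ω ^ 1) + (6 * (S ω ^ 2 * T j ω ^ 2) +
        (4 * (S ω ^ 1 * T j ω ^ 3) + T j ω ^ 4))) μ := by exact i31.add a3
    have b2 : Integrable (fun ω => 2 * (S ω ^ 1 * T j ω ^ 1) + T j ω ^ 2) μ := by
      exact i11.add (iT 2 (by norm_num))
    refine ⟨int4, ?_, ?_, ?_⟩
    · have : (fun ω => ∑ u ∈ insert j s, T u ω) = fun ω => S ω + T j ω := funext hsum
      rw [this, integral_add (by simpa using iS 1 (by norm_num)) (by simpa using iT 1 (by norm_num)),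
        hSm, hTm]; ring
    · rw [hexp2, integral_add (iS 2 (by norm_num)) b2,
        integral_add i11 (iT 2 (by norm_num)),
        integral_const_mul _ _, hprod 1 1 (by norm_num) (by norm_num)]
      simp only [pow_one, hTm, mul_zero, zero_mul, add_zero, zero_add]
      rw [Finset.sum_insert hj, hS2]
      ring
    · rw [hexp4,
        integral_add (iS 4 le_rfl) a4,
        integral_add i31 a3,
        integral_add i22 a2,
        integral_add i13 (iT 4 le_rfl),
        integral_const_mul _ _, integral_const_mul _ _, integral_const_mul _ _,
        hprod 3 1 (by norm_num) (by norm_num), hprod 2 2 (by norm_num) (by norm_num),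
        hprod 1 3 (by norm_num) (by norm_num)]
      simp only [pow_one, hTm, hSm, mul_zero, zero_mul, add_zero, zero_add]
      rw [Finset.sum_insert hj, Finset.sum_insert hj, hS2]
      nlinarith [hS4, hT2nn, hS2nn, sq_nonneg ((∑ u ∈ s, ∫ ω, T u ω ^ 2 ∂μ) - ∫ ω, T j ω ^ 2 ∂μ)]

lemma sqrt_mul_le_half {a b : ℝ} (ha : 0 ≤ a) (hb : 0 ≤ b) :
    Real.sqrt (a * b) ≤ (a + b) / 2 := by
  calc Real.sqrt (a * b) ≤ Real.sqrt (((a + b) / 2) ^ 2) :=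
        Real.sqrt_le_sqrt (by nlinarith [sq_nonneg (a - b)])
    _ = (a + b) / 2 := Real.sqrt_sq (by positivity)

lemma sqrt_add_le_sqrt_add_sqrt {a b : ℝ} (ha : 0 ≤ a) (hb : 0 ≤ b) :
    Real.sqrt (a + b) ≤ Real.sqrt a + Real.sqrt b := by
  rw [show a + b = a + b by rfl]
  have h : a + b ≤ (Real.sqrt a + Real.sqrt b) ^ 2 := by
    have h1 := Real.sq_sqrt ha
    have h2 := Real.sq_sqrt hb
    nlinarith [Real.sqrt_nonneg a, Real.sqrt_nonneg b]
  calc Real.sqrt (a + b) ≤ Real.sqrt ((Real.sqrt a + Real.sqrt b) ^ 2) := Real.sqrt_le_sqrt h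
    _ = _ := Real.sqrt_sq (by positivity)

variable {Ω : Type} [MeasurableSpace Ω] {μ : Measure Ω} [IsProbabilityMeasure μ]

lemma integral_abs_cube_le {T : Ω → ℝ} (hm : AEStronglyMeasurable T μ)
    (i2 : Integrable (fun ω => T ω ^ 2) μ)
    (i3 : Integrable (fun ω => |T ω| ^ 3) μ)
    (i4 : Integrable (fun ω => T ω ^ 4) μ) :
    (∫ ω, |T ω| ^ 3 ∂μ) ≤
      Real.sqrt (∫ ω, T ω ^ 2 ∂μ) * Real.sqrt (∫ ω, T ω ^ 4 ∂μ) := by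
  set A := ∫ ω, T ω ^ 2 ∂μ with hA
  set B := ∫ ω, T ω ^ 4 ∂μ with hB
  have hAnn : 0 ≤ A := integral_nonneg fun ω => by positivity
  have hBnn : 0 ≤ B := integral_nonneg fun ω => by positivity
  rcases eq_or_lt_of_le hAnn with hA0 | hApos
  · -- A = 0 : T = 0 a.e.
    have hT0 : (fun ω => T ω ^ 2) =ᵐ[μ] 0 := by
      rw [← integral_eq_zero_iff_of_nonneg (fun ω => by positivity) i2]
      exact hA0.symm
    have h3 : (fun ω => |T ω| ^ 3) =ᵐ[μ] 0 := by
      filter_upwards [hT0] with ω hω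
      have : T ω = 0 := by
        have := hω
        simp only [Pi.zero_apply] at this ⊢
        nlinarith [sq_nonneg (T ω)]
      simp [this]
    rw [integral_congr_ae h3]
    simp [Real.sqrt_nonneg, mul_nonneg]
  · -- A > 0
    have hBpos : 0 < B := by
      rcases eq_or_lt_of_le hBnn with hB0 | h
      · exfalso
        have hT0 : (fun ω => T ω ^ 4) =ᵐ[μ] 0 := by
          rw [← integral_eq_zero_iff_of_nonneg (fun ω => by positivity) i4]
          exact hB0.symm
        have h2 : (fun ω => T ω ^ 2) =ᵐ[μ] 0 := by
          filter_upwards [hT0] with ω hω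
          simp only [Pi.zero_apply] at hω ⊢
          nlinarith [sq_nonneg (T ω), sq_nonneg (T ω ^ 2)]
        have : A = 0 := by rw [hA, integral_congr_ae h2]; simp
        linarith
      · exact h
    set c := Real.sqrt B / Real.sqrt A with hc
    have hApos' : 0 < Real.sqrt A := Real.sqrt_pos.2 hApos
    have hBpos' : 0 < Real.sqrt B := Real.sqrt_pos.2 hBpos
    have hcpos : 0 < c := div_pos hBpos' hApos'
    have hpt : ∀ ω, |T ω| ^ 3 ≤ (c * T ω ^ 2 + T ω ^ 4 / c) / 2 := by
      intro ω
      have h1 : 0 ≤ (c * |T ω| - T ω ^ 2) ^ 2 := sq_nonneg _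
      have h2 : |T ω| ^ 2 = T ω ^ 2 := sq_abs (T ω)
      have h3 : |T ω| ^ 3 = |T ω| * T ω ^ 2 := by
        rw [← h2]; ring
      have key : 2 * c * |T ω| ^ 3 ≤ c ^ 2 * T ω ^ 2 + T ω ^ 4 := by nlinarith
      have hrw : (c * T ω ^ 2 + T ω ^ 4 / c) / 2 = (c ^ 2 * T ω ^ 2 + T ω ^ 4) / (2 * c) := by
        field_simp
      rw [hrw, le_div_iff₀ (by positivity)]
      nlinarith [key]
    have hint : Integrable (fun ω => (c * T ω ^ 2 + T ω ^ 4 / c) / 2) μ :=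
      (((i2.const_mul c).add (i4.div_const c)).div_const 2)
    calc (∫ ω, |T ω| ^ 3 ∂μ) ≤ ∫ ω, (c * T ω ^ 2 + T ω ^ 4 / c) / 2 ∂μ :=
          integral_mono i3 hint hpt
      _ = (c * A + B / c) / 2 := by
          rw [integral_div, integral_add (i2.const_mul c) (i4.div_const c),
            integral_const_mul, integral_div]
      _ = Real.sqrt A * Real.sqrt B := by
          rw [hc]
          have hA2 : Real.sqrt A ^ 2 = A := Real.sq_sqrt hAnn
          have hB2 : Real.sqrt B ^ 2 = B := Real.sq_sqrt hBnn
          field_simp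
          nlinarith [hA2, hB2]

end ProbHelpers


lemma euclid_inner_eq {d : ℕ} (x y : EuclideanSpace ℝ (Fin d)) :
    ⟪x, y⟫ = ∑ j, x j * y j := by
  simp [PiLp.inner_apply, RCLike.inner_apply, conj_trivial]
  exact Finset.sum_congr rfl fun _ _ => mul_comm _ _

lemma euclid_norm_sq {d : ℕ} (x : EuclideanSpace ℝ (Fin d)) :
    ‖x‖ ^ 2 = ∑ j, x j ^ 2 := by
  rw [EuclideanSpace.norm_eq, Real.sq_sqrt (by positivity)]
  simp [sq_abs]

lemma euclid_sum_apply {d : ℕ} {ι : Type*} (s : Finset ι)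
    (f : ι → EuclideanSpace ℝ (Fin d)) (j : Fin d) :
    (∑ u ∈ s, f u) j = ∑ u ∈ s, f u j := by
  classical
  induction s using Finset.induction_on with
  | empty => simp
  | insert a s hj ih => simp [Finset.sum_insert hj, ih]

lemma mulVecE_apply {d : ℕ} (M : Matrix (Fin d) (Fin d) ℝ)
    (x : EuclideanSpace ℝ (Fin d)) (j : Fin d) :
    mulVecE M x j = ∑ k, M j k * x k := by
  simp [mulVecE, Matrix.mulVec, dotProduct]

lemma inner_mulVecE {d : ℕ} (M : Matrix (Fin d) (Fin d) ℝ)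
    (x : EuclideanSpace ℝ (Fin d)) :
    ⟪x, mulVecE M x⟫ = ∑ j, ∑ k, M j k * (x j * x k) := by
  rw [euclid_inner_eq]
  refine Finset.sum_congr rfl fun j _ => ?_
  rw [mulVecE_apply, Finset.mul_sum]
  refine Finset.sum_congr rfl fun k _ => by ring

lemma sum_pow_four_le {ι : Type*} (s : Finset ι) (a : ι → ℝ) (ha : ∀ i, 0 ≤ a i) :
    (∑ i ∈ s, a i) ^ 4 ≤ (s.card : ℝ) ^ 3 * ∑ i ∈ s, a i ^ 4 := by
  have h1 : (∑ i ∈ s, a i) ^ 2 ≤ (s.card : ℝ) * ∑ i ∈ s, a i ^ 2 := by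
    simpa using sq_sum_le_card_mul_sum_sq (s := s) (f := a)
  have h2 : (∑ i ∈ s, a i ^ 2) ^ 2 ≤ (s.card : ℝ) * ∑ i ∈ s, (a i ^ 2) ^ 2 := by
    simpa using sq_sum_le_card_mul_sum_sq (s := s) (f := fun i => a i ^ 2)
  have hs2 : 0 ≤ ∑ i ∈ s, a i ^ 2 := Finset.sum_nonneg fun i _ => sq_nonneg _
  have hsum : 0 ≤ ∑ i ∈ s, a i := Finset.sum_nonneg fun i _ => ha i
  have hcard : (0:ℝ) ≤ s.card := Nat.cast_nonneg _
  calc (∑ i ∈ s, a i) ^ 4 = ((∑ i ∈ s, a i) ^ 2) ^ 2 := by ring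
    _ ≤ ((s.card : ℝ) * ∑ i ∈ s, a i ^ 2) ^ 2 := by
        apply pow_le_pow_left₀ (by positivity) h1
    _ = (s.card : ℝ) ^ 2 * (∑ i ∈ s, a i ^ 2) ^ 2 := by ring
    _ ≤ (s.card : ℝ) ^ 2 * ((s.card : ℝ) * ∑ i ∈ s, (a i ^ 2) ^ 2) := by
        apply mul_le_mul_of_nonneg_left h2 (by positivity)
    _ = (s.card : ℝ) ^ 3 * ∑ i ∈ s, a i ^ 4 := by
        rw [Finset.sum_congr rfl (fun i _ => by ring : ∀ i ∈ s, (a i ^ 2) ^ 2 = a i ^ 4)]; ring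

lemma rpow_three_halves {a : ℝ} (ha : 0 ≤ a) :
    a ^ ((3:ℝ)/2) = Real.sqrt a * a := by
  rcases eq_or_lt_of_le ha with h0 | hpos
  · rw [← h0, Real.zero_rpow (by norm_num)]; simp
  · rw [show (3:ℝ)/2 = 1/2 + 1 by norm_num, Real.rpow_add hpos, Real.rpow_one,
      ← Real.sqrt_eq_rpow]

end Helpers


set_option maxHeartbeats 2000000 in
/-- third-moment bound for `∑ᵢ E|ξᵢ · W^{(i)}|³` from the proof of
Theorem `BALL2`, where `W^{(i)} = W - ξᵢ`. -/
theorem third_moment_inner_bound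
    {d n : ℕ} {Ω : Type} [MeasurableSpace Ω] (μ : Measure Ω) [IsProbabilityMeasure μ]
    (ξ : Fin n → Ω → EuclideanSpace ℝ (Fin d))
    (hmeas : ∀ i, Measurable (ξ i))
    (hindep : iIndepFun ξ μ)
    (hmean : ∀ i, ∫ ω, ξ i ω ∂μ = 0)
    (hmom : ∀ i, Integrable (fun ω => ‖ξ i ω‖ ^ 4) μ) :
    ∑ i, ∫ ω, |⟪ξ i ω, (∑ u, ξ u ω) - ξ i ω⟫| ^ 3 ∂μ ≤
      hsNorm (covMatrix μ (fun ω => ∑ u, ξ u ω)) * (∑ i, ∫ ω, ‖ξ i ω‖ ^ 4 ∂μ) +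
        Real.sqrt 3 * ∑ i, ∫ ω,
          ⟪ξ i ω, mulVecE (covMatrix μ (fun ω' => ∑ u, ξ u ω')) (ξ i ω)⟫ ^ ((3 : ℝ) / 2) ∂μ := by
  classical
  set Em : Matrix (Fin d) (Fin d) ℝ := covMatrix μ (fun ω => ∑ u, ξ u ω) with hEm
  set Q : EuclideanSpace ℝ (Fin d) → ℝ := fun x => ∑ j, ∑ k, Em j k * (x j * x k) with hQ
  -- basic integrability
  have hnormint : ∀ (i : Fin n) (a : ℕ), a ≤ 4 → Integrable (fun ω => ‖ξ i ω‖ ^ a) μ := by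
    intro i a ha
    refine Integrable.mono' ((integrable_const 1).add (hmom i))
      (((hmeas i).norm.pow_const a).aestronglyMeasurable) ?_
    filter_upwards with ω
    have h := abs_pow_le_one_add_pow_four (‖ξ i ω‖) ha
    rw [abs_of_nonneg (norm_nonneg _)] at h
    simpa [abs_of_nonneg (pow_nonneg (norm_nonneg (ξ i ω)) a)] using h
  have hxiint : ∀ i, Integrable (ξ i) μ := by
    intro i
    refine Integrable.mono' ((integrable_const 1).add (hmom i)) (hmeas i).aestronglyMeasurable ?_
    filter_upwards with ω
    have h := abs_pow_le_one_add_pow_four (‖ξ i ω‖) (by norm_num : 1 ≤ 4)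
    rw [abs_of_nonneg (norm_nonneg _)] at h
    simpa using h
  have hcoordmeas : ∀ (i : Fin n) (j : Fin d), Measurable (fun ω => ξ i ω j) :=
    fun i j => ((measurable_pi_apply j).comp (WithLp.measurable_ofLp 2 _)).comp (hmeas i)
  have hcoordabs : ∀ (x : EuclideanSpace ℝ (Fin d)) (j : Fin d), |x j| ≤ ‖x‖ := by
    intro x j
    have h1 : |x j| = Real.sqrt (x j ^ 2) := (Real.sqrt_sq_eq_abs _).symm
    have h2 : ‖x‖ = Real.sqrt (∑ k, x k ^ 2) := by
      rw [EuclideanSpace.norm_eq]; congr 1; exact Finset.sum_congr rfl fun k _ => by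
        rw [Real.norm_eq_abs, sq_abs]
    rw [h1, h2]
    exact Real.sqrt_le_sqrt (Finset.single_le_sum (fun k _ => sq_nonneg (x k)) (Finset.mem_univ j))
  have hcoordL : ∀ (i : Fin n) (j : Fin d), Integrable (fun ω => ξ i ω j) μ := by
    intro i j
    refine Integrable.mono' ((integrable_const 1).add (hmom i))
      (hcoordmeas i j).aestronglyMeasurable ?_
    filter_upwards with ω
    calc ‖ξ i ω j‖ = |ξ i ω j| := rfl
      _ ≤ ‖ξ i ω‖ := hcoordabs _ _
      _ ≤ 1 + ‖ξ i ω‖ ^ 4 := by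
          have h := abs_pow_le_one_add_pow_four (‖ξ i ω‖) (by norm_num : 1 ≤ 4)
          rw [abs_of_nonneg (norm_nonneg _)] at h; simpa using h
  have hcoordmean : ∀ (i : Fin n) (j : Fin d), (∫ ω, ξ i ω j ∂μ) = 0 := by
    intro i j
    have h := (EuclideanSpace.proj j : EuclideanSpace ℝ (Fin d) →L[ℝ] ℝ).integral_comp_comm
      (hxiint i)
    have h2 : (∫ ω, ξ i ω j ∂μ) = (EuclideanSpace.proj j : EuclideanSpace ℝ (Fin d) →L[ℝ] ℝ)
        (∫ ω, ξ i ω ∂μ) := h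
    rw [h2, hmean i, map_zero]
  have hpairint : ∀ (i i' : Fin n) (j k : Fin d),
      Integrable (fun ω => ξ i ω j * ξ i' ω k) μ := by
    intro i i' j k
    by_cases h : i = i'
    · subst h
      refine Integrable.mono' ((integrable_const 1).add (hmom i))
        ((hcoordmeas i j).mul (hcoordmeas i k)).aestronglyMeasurable ?_
      filter_upwards with ω
      have h1 := hcoordabs (ξ i ω) j
      have h2 := hcoordabs (ξ i ω) k
      have h3 := abs_pow_le_one_add_pow_four (‖ξ i ω‖) (by norm_num : 2 ≤ 4)
      rw [abs_of_nonneg (norm_nonneg _)] at h3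
      have : ‖ξ i ω j * ξ i ω k‖ = |ξ i ω j| * |ξ i ω k| := by
        rw [Real.norm_eq_abs, abs_mul]
      rw [this]
      show |ξ i ω j| * |ξ i ω k| ≤ 1 + ‖ξ i ω‖ ^ 4
      nlinarith [abs_nonneg (ξ i ω j), abs_nonneg (ξ i ω k), norm_nonneg (ξ i ω)]
    · have hI : IndepFun (fun ω => ξ i ω j) (fun ω => ξ i' ω k) μ :=
        (hindep.indepFun h).comp ((measurable_pi_apply j).comp (WithLp.measurable_ofLp 2 _)) ((measurable_pi_apply k).comp (WithLp.measurable_ofLp 2 _))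
      exact hI.integrable_mul (hcoordL i j) (hcoordL i' k)
  have hoffdiag : ∀ (i i' : Fin n), i ≠ i' → ∀ (j k : Fin d),
      (∫ ω, ξ i ω j * ξ i' ω k ∂μ) = 0 := by
    intro i i' h j k
    have hI : IndepFun (fun ω => ξ i ω j) (fun ω => ξ i' ω k) μ :=
      (hindep.indepFun h).comp ((measurable_pi_apply j).comp (WithLp.measurable_ofLp 2 _)) ((measurable_pi_apply k).comp (WithLp.measurable_ofLp 2 _))
    have heq : (∫ ω, ξ i ω j * ξ i' ω k ∂μ) =
        (∫ ω, ξ i ω j ∂μ) * ∫ ω, ξ i' ω k ∂μ :=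
      hI.integral_fun_mul_eq_mul_integral (hcoordL i j).aestronglyMeasurable (hcoordL i' k).aestronglyMeasurable
    rw [heq, hcoordmean i j, zero_mul]
  have hWcoord : ∀ (ω : Ω) (j : Fin d), (∑ u, ξ u ω) j = ∑ u, ξ u ω j :=
    fun ω j => euclid_sum_apply _ _ _
  have hcov : ∀ (j k : Fin d), Em j k = ∑ i, ∫ ω, ξ i ω j * ξ i ω k ∂μ := by
    intro j k
    have hWj : ∀ (j : Fin d), (∫ ω, (∑ u, ξ u ω) j ∂μ) = 0 := by
      intro j
      have he : (fun ω => (∑ u, ξ u ω) j) = fun ω => ∑ u, ξ u ω j :=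
        funext fun ω => hWcoord ω j
      rw [he, integral_finset_sum _ fun u _ => hcoordL u j]
      simp [hcoordmean]
    have hprod : (∫ ω, (∑ u, ξ u ω) j * (∑ u, ξ u ω) k ∂μ) =
        ∑ i, ∫ ω, ξ i ω j * ξ i ω k ∂μ := by
      have he : (fun ω => (∑ u, ξ u ω) j * (∑ u, ξ u ω) k) =
          fun ω => ∑ u, ∑ v, ξ u ω j * ξ v ω k := by
        funext ω; rw [hWcoord, hWcoord, Finset.sum_mul_sum]
      rw [he, integral_finset_sum _ fun u _ =>
        integrable_finset_sum _ fun v _ => hpairint u v j k]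
      rw [Finset.sum_congr rfl fun u _ =>
        integral_finset_sum _ fun v _ => hpairint u v j k]
      exact Finset.sum_congr rfl fun u _ =>
        Finset.sum_eq_single u (fun v _ hvu => hoffdiag u v (Ne.symm hvu) j k)
          (fun hu => absurd (Finset.mem_univ u) hu)
    show covMatrix μ (fun ω => ∑ u, ξ u ω) j k = _
    simp only [covMatrix, Matrix.of_apply]
    rw [hprod, hWj j, hWj k, zero_mul, sub_zero]
  -- inner product expansion of squares
  have hinner2 : ∀ (x : EuclideanSpace ℝ (Fin d)) (i : Fin n) (ω : Ω),
      ⟪x, ξ i ω⟫ ^ 2 = ∑ j, ∑ k, (x j * x k) * (ξ i ω j * ξ i ω k) := by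
    intro x i ω
    rw [pow_two, euclid_inner_eq, Finset.sum_mul_sum]
    exact Finset.sum_congr rfl fun j _ => Finset.sum_congr rfl fun k _ => by ring
  have hip2int : ∀ (x : EuclideanSpace ℝ (Fin d)) (i : Fin n),
      Integrable (fun ω => ⟪x, ξ i ω⟫ ^ 2) μ := by
    intro x i
    have he : (fun ω => ⟪x, ξ i ω⟫ ^ 2) =
        fun ω => ∑ j, ∑ k, (x j * x k) * (ξ i ω j * ξ i ω k) := funext fun ω => hinner2 x i ω
    rw [he]
    exact integrable_finset_sum _ fun j _ => integrable_finset_sum _ fun k _ =>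
      (hpairint i i j k).const_mul _
  have hip2 : ∀ (x : EuclideanSpace ℝ (Fin d)) (i : Fin n),
      (∫ ω, ⟪x, ξ i ω⟫ ^ 2 ∂μ) =
        ∑ j, ∑ k, (x j * x k) * ∫ ω, ξ i ω j * ξ i ω k ∂μ := by
    intro x i
    have he : (fun ω => ⟪x, ξ i ω⟫ ^ 2) =
        fun ω => ∑ j, ∑ k, (x j * x k) * (ξ i ω j * ξ i ω k) := funext fun ω => hinner2 x i ω
    rw [he, integral_finset_sum _ fun j _ => integrable_finset_sum _ fun k _ =>
      (hpairint i i j k).const_mul _]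
    exact Finset.sum_congr rfl fun j _ => by
      rw [integral_finset_sum _ fun k _ => (hpairint i i j k).const_mul _]
      exact Finset.sum_congr rfl fun k _ => integral_const_mul _ _
  have hQsum : ∀ x, Q x = ∑ i, ∫ ω, ⟪x, ξ i ω⟫ ^ 2 ∂μ := by
    intro x
    rw [Finset.sum_congr rfl fun (i : Fin n) _ => hip2 x i]
    show (∑ j, ∑ k, Em j k * (x j * x k)) = _
    rw [Finset.sum_congr rfl fun (j : Fin d) _ => Finset.sum_congr rfl fun (k : Fin d) _ => by
      rw [hcov j k, Finset.sum_mul]]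
    calc ∑ j, ∑ k, ∑ i, (∫ ω, ξ i ω j * ξ i ω k ∂μ) * (x j * x k)
        = ∑ j, ∑ i, ∑ k, (∫ ω, ξ i ω j * ξ i ω k ∂μ) * (x j * x k) :=
          Finset.sum_congr rfl fun j _ => Finset.sum_comm
      _ = ∑ i, ∑ j, ∑ k, (∫ ω, ξ i ω j * ξ i ω k ∂μ) * (x j * x k) := Finset.sum_comm
      _ = ∑ i, ∑ j, ∑ k, x j * x k * ∫ ω, ξ i ω j * ξ i ω k ∂μ :=
          Finset.sum_congr rfl fun i _ => Finset.sum_congr rfl fun j _ =>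
            Finset.sum_congr rfl fun k _ => mul_comm _ _
  have hQnn : ∀ x, 0 ≤ Q x := by
    intro x
    rw [hQsum]
    exact Finset.sum_nonneg fun i _ => integral_nonneg fun ω => sq_nonneg _
  have hEmnn : 0 ≤ hsNorm Em := Real.sqrt_nonneg _
  have hQle : ∀ x, Q x ≤ hsNorm Em * ‖x‖ ^ 2 := by
    intro x
    have h1 : Q x = ∑ p : Fin d × Fin d, Em p.1 p.2 * (x p.1 * x p.2) := by
      rw [hQ]
      exact (Finset.sum_product (s := Finset.univ) (t := Finset.univ)
        (f := fun p : Fin d × Fin d => Em p.1 p.2 * (x p.1 * x p.2))).symm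
    have hcs : (∑ p : Fin d × Fin d, Em p.1 p.2 * (x p.1 * x p.2)) ^ 2 ≤
        (∑ p : Fin d × Fin d, (Em p.1 p.2) ^ 2) *
          ∑ p : Fin d × Fin d, (x p.1 * x p.2) ^ 2 :=
      Finset.sum_mul_sq_le_sq_mul_sq _ _ _
    have h2 : (∑ p : Fin d × Fin d, (Em p.1 p.2) ^ 2) = ∑ j, ∑ k, Em j k ^ 2 :=
      Finset.sum_product (s := Finset.univ) (t := Finset.univ)
        (f := fun p : Fin d × Fin d => Em p.1 p.2 ^ 2)
    have h3 : (∑ p : Fin d × Fin d, (x p.1 * x p.2) ^ 2) = (‖x‖ ^ 2) ^ 2 := by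
      have e1 : (∑ p : Fin d × Fin d, (x p.1 * x p.2) ^ 2) = ∑ j, ∑ k, (x j * x k) ^ 2 :=
        Finset.sum_product (s := Finset.univ) (t := Finset.univ)
          (f := fun p : Fin d × Fin d => (x p.1 * x p.2) ^ 2)
      rw [e1, euclid_norm_sq, pow_two (∑ j : Fin d, x j ^ 2), Finset.sum_mul_sum]
      exact Finset.sum_congr rfl fun j _ => Finset.sum_congr rfl fun k _ => by ring
    have h4 : Q x ≤ |Q x| := le_abs_self _
    have h5 : |Q x| = Real.sqrt ((Q x) ^ 2) := (Real.sqrt_sq_eq_abs _).symm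
    calc Q x ≤ Real.sqrt ((Q x) ^ 2) := h4.trans_eq h5
      _ ≤ Real.sqrt ((∑ j, ∑ k, Em j k ^ 2) * (‖x‖ ^ 2) ^ 2) := by
          apply Real.sqrt_le_sqrt
          rw [← h2, ← h3, h1]
          exact hcs
      _ = hsNorm Em * ‖x‖ ^ 2 := by
          rw [Real.sqrt_mul' _ (by positivity : (0:ℝ) ≤ (‖x‖ ^ 2) ^ 2), Real.sqrt_sq (by positivity)]
          rfl
  -- fourth moments of inner products
  have hip4int : ∀ (x : EuclideanSpace ℝ (Fin d)) (i : Fin n),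
      Integrable (fun ω => ⟪x, ξ i ω⟫ ^ 4) μ := by
    intro x i
    refine Integrable.mono' ((hmom i).const_mul (‖x‖ ^ 4))
      ((((innerSL ℝ x).continuous.measurable.comp (hmeas i)).pow_const 4).aestronglyMeasurable)
      ?_
    filter_upwards with ω
    have h := abs_real_inner_le_norm x (ξ i ω)
    have : ‖⟪x, ξ i ω⟫ ^ 4‖ = |⟪x, ξ i ω⟫| ^ 4 := by rw [Real.norm_eq_abs, abs_pow]
    rw [this]
    calc |⟪x, ξ i ω⟫| ^ 4 ≤ (‖x‖ * ‖ξ i ω‖) ^ 4 :=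
          pow_le_pow_left₀ (abs_nonneg _) h 4
      _ = ‖x‖ ^ 4 * ‖ξ i ω‖ ^ 4 := by ring
  set Sf : EuclideanSpace ℝ (Fin d) → ℝ := fun x => ∑ u, ∫ ω, ⟪x, ξ u ω⟫ ^ 4 ∂μ with hSf
  have hSfnn : ∀ x, 0 ≤ Sf x := fun x =>
    Finset.sum_nonneg fun u _ => integral_nonneg fun ω => by positivity
  -- main pointwise-in-x bound
  have key1 : ∀ (i : Fin n) (x : EuclideanSpace ℝ (Fin d)),
      (∫ ω, |⟪x, ∑ u ∈ Finset.univ.erase i, ξ u ω⟫| ^ 3 ∂μ) ≤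
        Real.sqrt 3 * (Real.sqrt (Q x) * Q x) + Real.sqrt (Q x * Sf x) := by
    intro i x
    have hTmeas : ∀ u, Measurable (fun ω => ⟪x, ξ u ω⟫) := fun u =>
      (innerSL ℝ x).continuous.measurable.comp (hmeas u)
    have hTindep : iIndepFun (fun u => fun ω => ⟪x, ξ u ω⟫) μ :=
      hindep.comp (fun _ => fun v => ⟪x, v⟫) fun _ => (innerSL ℝ x).continuous.measurable
    have hTmean : ∀ u, (∫ ω, ⟪x, ξ u ω⟫ ∂μ) = 0 := fun u => by
      rw [integral_inner (hxiint u) x, hmean u, inner_zero_right]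
    obtain ⟨int4, _, eq2, le4⟩ := moments_sum hTmeas hTindep hTmean
      (fun u => hip4int x u) (Finset.univ.erase i)
    have hWsum : ∀ ω, ⟪x, ∑ u ∈ Finset.univ.erase i, ξ u ω⟫ =
        ∑ u ∈ Finset.univ.erase i, ⟪x, ξ u ω⟫ := fun ω => inner_sum _ _ _
    have hsmeas : Measurable (fun ω => ∑ u ∈ Finset.univ.erase i, ⟪x, ξ u ω⟫) :=
      Finset.measurable_sum _ fun u _ => hTmeas u
    have hsub2 : (∑ u ∈ Finset.univ.erase i, ∫ ω, ⟪x, ξ u ω⟫ ^ 2 ∂μ) ≤ Q x := by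
      rw [hQsum]
      exact Finset.sum_le_sum_of_subset_of_nonneg (Finset.subset_univ _)
        fun u _ _ => integral_nonneg fun ω => sq_nonneg _
    have hsub2nn : 0 ≤ ∑ u ∈ Finset.univ.erase i, ∫ ω, ⟪x, ξ u ω⟫ ^ 2 ∂μ :=
      Finset.sum_nonneg fun u _ => integral_nonneg fun ω => sq_nonneg _
    have hsub4 : (∑ u ∈ Finset.univ.erase i, ∫ ω, ⟪x, ξ u ω⟫ ^ 4 ∂μ) ≤ Sf x :=
      Finset.sum_le_sum_of_subset_of_nonneg (Finset.subset_univ _)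
        fun u _ _ => integral_nonneg fun ω => by positivity
    have i2 : Integrable (fun ω => (∑ u ∈ Finset.univ.erase i, ⟪x, ξ u ω⟫) ^ 2) μ :=
      integrable_pow_of_four hsmeas.aestronglyMeasurable int4 (by norm_num)
    have i3 : Integrable (fun ω => |∑ u ∈ Finset.univ.erase i, ⟪x, ξ u ω⟫| ^ 3) μ := by
      refine Integrable.mono' ((integrable_const 1).add int4)
        ((hsmeas.abs.pow_const 3).aestronglyMeasurable) ?_
      filter_upwards with ω
      have h := abs_pow_le_one_add_pow_four (∑ u ∈ Finset.univ.erase i, ⟪x, ξ u ω⟫)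
        (by norm_num : 3 ≤ 4)
      calc ‖|∑ u ∈ Finset.univ.erase i, ⟪x, ξ u ω⟫| ^ 3‖
          = |∑ u ∈ Finset.univ.erase i, ⟪x, ξ u ω⟫| ^ 3 := by
            rw [Real.norm_eq_abs, abs_pow, abs_abs]
        _ ≤ 1 + (∑ u ∈ Finset.univ.erase i, ⟪x, ξ u ω⟫) ^ 4 := h
    have hcube := integral_abs_cube_le hsmeas.aestronglyMeasurable i2 i3 int4
    have hE2le : (∫ ω, (∑ u ∈ Finset.univ.erase i, ⟪x, ξ u ω⟫) ^ 2 ∂μ) ≤ Q x := by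
      rw [eq2]; exact hsub2
    have hE2nn : 0 ≤ ∫ ω, (∑ u ∈ Finset.univ.erase i, ⟪x, ξ u ω⟫) ^ 2 ∂μ :=
      integral_nonneg fun ω => sq_nonneg _
    have hE4le : (∫ ω, (∑ u ∈ Finset.univ.erase i, ⟪x, ξ u ω⟫) ^ 4 ∂μ) ≤
        3 * Q x ^ 2 + Sf x := by
      refine le4.trans ?_
      have : (∑ u ∈ Finset.univ.erase i, ∫ ω, ⟪x, ξ u ω⟫ ^ 2 ∂μ) ^ 2 ≤ Q x ^ 2 :=
        pow_le_pow_left₀ hsub2nn hsub2 2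
      nlinarith
    have hE4nn : 0 ≤ ∫ ω, (∑ u ∈ Finset.univ.erase i, ⟪x, ξ u ω⟫) ^ 4 ∂μ :=
      integral_nonneg fun ω => by positivity
    have step1 : (∫ ω, |⟪x, ∑ u ∈ Finset.univ.erase i, ξ u ω⟫| ^ 3 ∂μ) ≤
        Real.sqrt (Q x) * Real.sqrt (3 * Q x ^ 2 + Sf x) := by
      have he : (fun ω => |⟪x, ∑ u ∈ Finset.univ.erase i, ξ u ω⟫| ^ 3) =
          fun ω => |∑ u ∈ Finset.univ.erase i, ⟪x, ξ u ω⟫| ^ 3 :=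
        funext fun ω => by rw [hWsum ω]
      rw [he]
      refine hcube.trans ?_
      exact mul_le_mul (Real.sqrt_le_sqrt hE2le) (Real.sqrt_le_sqrt hE4le)
        (Real.sqrt_nonneg _) (Real.sqrt_nonneg _)
    refine step1.trans ?_
    have hsplit : Real.sqrt (3 * Q x ^ 2 + Sf x) ≤
        Real.sqrt 3 * Q x + Real.sqrt (Sf x) := by
      have h1 : Real.sqrt (3 * Q x ^ 2 + Sf x) ≤
          Real.sqrt (3 * Q x ^ 2) + Real.sqrt (Sf x) :=
        sqrt_add_le_sqrt_add_sqrt (by positivity) (hSfnn x)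
      have h2 : Real.sqrt (3 * Q x ^ 2) = Real.sqrt 3 * Q x := by
        rw [Real.sqrt_mul (by norm_num), Real.sqrt_sq (hQnn x)]
      linarith
    calc Real.sqrt (Q x) * Real.sqrt (3 * Q x ^ 2 + Sf x) ≤
        Real.sqrt (Q x) * (Real.sqrt 3 * Q x + Real.sqrt (Sf x)) :=
          mul_le_mul_of_nonneg_left hsplit (Real.sqrt_nonneg _)
      _ = Real.sqrt 3 * (Real.sqrt (Q x) * Q x) +
          Real.sqrt (Q x) * Real.sqrt (Sf x) := by ring
      _ = Real.sqrt 3 * (Real.sqrt (Q x) * Q x) + Real.sqrt (Q x * Sf x) := by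
          rw [Real.sqrt_mul (hQnn x)]
  set G : EuclideanSpace ℝ (Fin d) → ℝ := fun x =>
    Real.sqrt 3 * (Real.sqrt (Q x) * Q x) + Real.sqrt (Q x * Sf x) with hG
  set Bt : ℝ := ∑ u, ∫ ω, ‖ξ u ω‖ ^ 4 ∂μ with hBt
  have hBtnn : 0 ≤ Bt :=
    Finset.sum_nonneg fun u _ => integral_nonneg fun ω => by positivity
  have hSfle : ∀ x, Sf x ≤ Bt * ‖x‖ ^ 4 := by
    intro x
    rw [hSf, hBt, Finset.sum_mul]
    refine Finset.sum_le_sum fun u _ => ?_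
    rw [← integral_mul_const]
    refine integral_mono (hip4int x u) ((hmom u).mul_const _) fun ω => ?_
    have h := abs_real_inner_le_norm x (ξ u ω)
    calc ⟪x, ξ u ω⟫ ^ 4 = |⟪x, ξ u ω⟫| ^ 4 := by rw [← abs_pow, abs_of_nonneg (by positivity)]
      _ ≤ (‖x‖ * ‖ξ u ω‖) ^ 4 := pow_le_pow_left₀ (abs_nonneg _) h 4
      _ = ‖ξ u ω‖ ^ 4 * ‖x‖ ^ 4 := by ring
  -- measurability of Q, Sf, G
  have hQmeasf : Measurable Q := by
    rw [hQ]
    exact Finset.measurable_sum _ fun j _ => Finset.measurable_sum _ fun k _ =>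
      (((measurable_pi_apply j).comp (WithLp.measurable_ofLp 2 _)).mul ((measurable_pi_apply k).comp (WithLp.measurable_ofLp 2 _))).const_mul _
  have hSfmeasf : Measurable Sf := by
    rw [hSf]
    refine Finset.measurable_sum _ fun u _ => ?_
    have hF : StronglyMeasurable
        fun p : (EuclideanSpace ℝ (Fin d)) × Ω => ⟪p.1, ξ u p.2⟫ ^ 4 :=
      ((continuous_inner.measurable.comp
        (measurable_fst.prodMk ((hmeas u).comp measurable_snd))).pow_const 4).stronglyMeasurable
    exact hF.integral_prod_right'.measurable
  have hGmeas : Measurable G := by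
    rw [hG]
    have m1 : Measurable fun x => Real.sqrt (Q x) :=
      Real.continuous_sqrt.measurable.comp hQmeasf
    exact ((m1.mul hQmeasf).const_mul _).add
      (Real.continuous_sqrt.measurable.comp (hQmeasf.mul hSfmeasf))
  have hGnn : ∀ x, 0 ≤ G x := by
    intro x
    rw [hG]
    have := Real.sqrt_nonneg (Q x * Sf x)
    have := Real.sqrt_nonneg (Q x)
    have := Real.sqrt_nonneg (3:ℝ)
    have := hQnn x
    positivity
  have hGle : ∀ x, G x ≤ (Real.sqrt 3 * (Real.sqrt (hsNorm Em) * hsNorm Em) +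
      Real.sqrt (hsNorm Em * Bt)) * (1 + ‖x‖ ^ 4) := by
    intro x
    have b1 : Real.sqrt (Q x) ≤ Real.sqrt (hsNorm Em) * ‖x‖ := by
      have h := Real.sqrt_le_sqrt (hQle x)
      rwa [Real.sqrt_mul hEmnn, Real.sqrt_sq (norm_nonneg x)] at h
    have b2 : Real.sqrt (Q x) * Q x ≤ Real.sqrt (hsNorm Em) * hsNorm Em * ‖x‖ ^ 3 := by
      calc Real.sqrt (Q x) * Q x ≤ (Real.sqrt (hsNorm Em) * ‖x‖) * (hsNorm Em * ‖x‖ ^ 2) :=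
            mul_le_mul b1 (hQle x) (hQnn x) (by positivity)
        _ = Real.sqrt (hsNorm Em) * hsNorm Em * ‖x‖ ^ 3 := by ring
    have b3 : Real.sqrt (Q x * Sf x) ≤ Real.sqrt (hsNorm Em * Bt) * ‖x‖ ^ 3 := by
      have h1 : Q x * Sf x ≤ (hsNorm Em * Bt) * (‖x‖ ^ 3) ^ 2 := by
        calc Q x * Sf x ≤ (hsNorm Em * ‖x‖ ^ 2) * (Bt * ‖x‖ ^ 4) :=
              mul_le_mul (hQle x) (hSfle x) (hSfnn x) (by positivity)
          _ = (hsNorm Em * Bt) * (‖x‖ ^ 3) ^ 2 := by ring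
      calc Real.sqrt (Q x * Sf x) ≤ Real.sqrt ((hsNorm Em * Bt) * (‖x‖ ^ 3) ^ 2) :=
            Real.sqrt_le_sqrt h1
        _ = Real.sqrt (hsNorm Em * Bt) * ‖x‖ ^ 3 := by
            rw [Real.sqrt_mul (by positivity), Real.sqrt_sq (by positivity)]
    have hx3 : ‖x‖ ^ 3 ≤ 1 + ‖x‖ ^ 4 := by
      have h := abs_pow_le_one_add_pow_four (‖x‖) (by norm_num : 3 ≤ 4)
      rwa [abs_of_nonneg (norm_nonneg x)] at h
    have hs3 : (0:ℝ) ≤ Real.sqrt 3 := Real.sqrt_nonneg 3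
    have hc1 : (0:ℝ) ≤ Real.sqrt (hsNorm Em) * hsNorm Em :=
      mul_nonneg (Real.sqrt_nonneg _) hEmnn
    have hc2 : (0:ℝ) ≤ Real.sqrt (hsNorm Em * Bt) := Real.sqrt_nonneg _
    calc G x = Real.sqrt 3 * (Real.sqrt (Q x) * Q x) + Real.sqrt (Q x * Sf x) := by
          simp only [hG]
      _ ≤ Real.sqrt 3 * (Real.sqrt (hsNorm Em) * hsNorm Em * ‖x‖ ^ 3) +
          Real.sqrt (hsNorm Em * Bt) * ‖x‖ ^ 3 :=
            add_le_add (mul_le_mul_of_nonneg_left b2 hs3) b3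
      _ = (Real.sqrt 3 * (Real.sqrt (hsNorm Em) * hsNorm Em) +
          Real.sqrt (hsNorm Em * Bt)) * ‖x‖ ^ 3 := by ring
      _ ≤ (Real.sqrt 3 * (Real.sqrt (hsNorm Em) * hsNorm Em) +
          Real.sqrt (hsNorm Em * Bt)) * (1 + ‖x‖ ^ 4) :=
            mul_le_mul_of_nonneg_left hx3 (by positivity)
  -- W_i measurability / integrability
  have hWi_meas : ∀ i, Measurable (fun ω => ∑ u ∈ Finset.univ.erase i, ξ u ω) :=
    fun i => Finset.measurable_sum _ fun u _ => hmeas u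
  have hWi4 : ∀ i, Integrable (fun ω => ‖∑ u ∈ Finset.univ.erase i, ξ u ω‖ ^ 4) μ := by
    intro i
    refine Integrable.mono'
      ((integrable_finset_sum Finset.univ fun u _ => hmom u).const_mul ((n:ℝ) ^ 3))
      (((hWi_meas i).norm.pow_const 4).aestronglyMeasurable) ?_
    filter_upwards with ω
    have h1 : ‖∑ u ∈ Finset.univ.erase i, ξ u ω‖ ≤ ∑ u ∈ Finset.univ.erase i, ‖ξ u ω‖ :=
      norm_sum_le _ _
    have h2 : (∑ u ∈ Finset.univ.erase i, ‖ξ u ω‖) ≤ ∑ u, ‖ξ u ω‖ :=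
      Finset.sum_le_sum_of_subset_of_nonneg (Finset.subset_univ _)
        fun u _ _ => norm_nonneg _
    have h3 : (∑ u, ‖ξ u ω‖) ^ 4 ≤ ((n:ℝ)) ^ 3 * ∑ u, ‖ξ u ω‖ ^ 4 := by
      have := sum_pow_four_le Finset.univ (fun u => ‖ξ u ω‖) (fun u => norm_nonneg _)
      simpa [Finset.card_univ] using this
    calc ‖‖∑ u ∈ Finset.univ.erase i, ξ u ω‖ ^ 4‖
        = ‖∑ u ∈ Finset.univ.erase i, ξ u ω‖ ^ 4 := by
          rw [Real.norm_eq_abs, abs_of_nonneg (by positivity)]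
      _ ≤ (∑ u, ‖ξ u ω‖) ^ 4 := by
          apply pow_le_pow_left₀ (norm_nonneg _) (h1.trans h2)
      _ ≤ ((n:ℝ)) ^ 3 * ∑ u, ‖ξ u ω‖ ^ 4 := h3
  -- decoupling
  have hdec : ∀ i, (∫ ω, |⟪ξ i ω, ∑ u ∈ Finset.univ.erase i, ξ u ω⟫| ^ 3 ∂μ) ≤
      ∫ ω, G (ξ i ω) ∂μ := by
    intro i
    set Wi : Ω → EuclideanSpace ℝ (Fin d) := fun ω => ∑ u ∈ Finset.univ.erase i, ξ u ω
      with hWidef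
    have hWim : Measurable Wi := hWi_meas i
    have hIW : IndepFun (ξ i) Wi μ := by
      have h := (hindep.indepFun_finset_sum_of_notMem hmeas
        (Finset.notMem_erase i Finset.univ)).symm
      have he : (∑ u ∈ Finset.univ.erase i, ξ u) = Wi := by
        funext ω
        rw [hWidef]
        exact Finset.sum_apply ω (Finset.univ.erase i) ξ
      rwa [he] at h
    have hmap : μ.map (fun ω => (ξ i ω, Wi ω)) = (μ.map (ξ i)).prod (μ.map Wi) :=
      (indepFun_iff_map_prod_eq_prod_map_map (hmeas i).aemeasurable
        hWim.aemeasurable).mp hIW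
    haveI : IsProbabilityMeasure (μ.map (ξ i)) :=
      Measure.isProbabilityMeasure_map (hmeas i).aemeasurable
    haveI : IsProbabilityMeasure (μ.map Wi) :=
      Measure.isProbabilityMeasure_map hWim.aemeasurable
    have hgcont : Continuous
        (fun p : (EuclideanSpace ℝ (Fin d)) × (EuclideanSpace ℝ (Fin d)) =>
          |⟪p.1, p.2⟫| ^ 3) := (continuous_inner.abs.pow 3)
    have hpairmeas : Measurable (fun ω => (ξ i ω, Wi ω)) := (hmeas i).prodMk hWim
    have e1 : (∫ ω, |⟪ξ i ω, Wi ω⟫| ^ 3 ∂μ)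
        = ∫ p, |⟪p.1, p.2⟫| ^ 3 ∂((μ.map (ξ i)).prod (μ.map Wi)) := by
      rw [← hmap]
      exact (integral_map hpairmeas.aemeasurable hgcont.aestronglyMeasurable).symm
    have hcont14 : Continuous fun x : EuclideanSpace ℝ (Fin d) => 1 + ‖x‖ ^ 4 :=
      continuous_const.add ((continuous_norm).pow 4)
    have hint1 : Integrable (fun x : EuclideanSpace ℝ (Fin d) => 1 + ‖x‖ ^ 4)
        (μ.map (ξ i)) := by
      rw [integrable_map_measure hcont14.aestronglyMeasurable (hmeas i).aemeasurable]
      exact (integrable_const 1).add (hmom i)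
    have hint2 : Integrable (fun x : EuclideanSpace ℝ (Fin d) => 1 + ‖x‖ ^ 4)
        (μ.map Wi) := by
      rw [integrable_map_measure hcont14.aestronglyMeasurable hWim.aemeasurable]
      exact (integrable_const 1).add (hWi4 i)
    have hgint : Integrable (fun p : _ × _ => |⟪p.1, p.2⟫| ^ 3)
        ((μ.map (ξ i)).prod (μ.map Wi)) := by
      refine Integrable.mono' (g := fun p => (1 + ‖p.1‖ ^ 4) * (1 + ‖p.2‖ ^ 4))
        (hint1.mul_prod hint2) hgcont.aestronglyMeasurable ?_
      filter_upwards with p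
      have h1 : |⟪p.1, p.2⟫| ≤ ‖p.1‖ * ‖p.2‖ := abs_real_inner_le_norm _ _
      have h2 : |⟪p.1, p.2⟫| ^ 3 ≤ (‖p.1‖ * ‖p.2‖) ^ 3 :=
        pow_le_pow_left₀ (abs_nonneg _) h1 3
      have h3 : ‖p.1‖ ^ 3 ≤ 1 + ‖p.1‖ ^ 4 := by
        have h := abs_pow_le_one_add_pow_four (‖p.1‖) (by norm_num : 3 ≤ 4)
        rwa [abs_of_nonneg (norm_nonneg _)] at h
      have h4 : ‖p.2‖ ^ 3 ≤ 1 + ‖p.2‖ ^ 4 := by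
        have h := abs_pow_le_one_add_pow_four (‖p.2‖) (by norm_num : 3 ≤ 4)
        rwa [abs_of_nonneg (norm_nonneg _)] at h
      calc ‖|⟪p.1, p.2⟫| ^ 3‖ = |⟪p.1, p.2⟫| ^ 3 := by
            rw [Real.norm_eq_abs, abs_of_nonneg (by positivity)]
        _ ≤ ‖p.1‖ ^ 3 * ‖p.2‖ ^ 3 := by rw [mul_pow] at h2; exact h2
        _ ≤ (1 + ‖p.1‖ ^ 4) * (1 + ‖p.2‖ ^ 4) :=
            mul_le_mul h3 h4 (by positivity) (by positivity)
    have hib : ∀ x, (∫ w, |⟪x, w⟫| ^ 3 ∂(μ.map Wi)) ≤ G x := by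
      intro x
      have he : (∫ w, |⟪x, w⟫| ^ 3 ∂(μ.map Wi)) = ∫ ω, |⟪x, Wi ω⟫| ^ 3 ∂μ :=
        integral_map hWim.aemeasurable
          (((innerSL ℝ x).continuous.abs.pow 3).aestronglyMeasurable)
      rw [he, hG]
      exact key1 i x
    have hGint : Integrable G (μ.map (ξ i)) := by
      refine Integrable.mono' (hint1.const_mul (Real.sqrt 3 *
        (Real.sqrt (hsNorm Em) * hsNorm Em) + Real.sqrt (hsNorm Em * Bt)))
        hGmeas.aestronglyMeasurable ?_
      filter_upwards with x
      rw [Real.norm_eq_abs, abs_of_nonneg (hGnn x)]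
      exact hGle x
    calc (∫ ω, |⟪ξ i ω, Wi ω⟫| ^ 3 ∂μ)
        = ∫ p, |⟪p.1, p.2⟫| ^ 3 ∂((μ.map (ξ i)).prod (μ.map Wi)) := e1
      _ = ∫ x, ∫ w, |⟪x, w⟫| ^ 3 ∂(μ.map Wi) ∂(μ.map (ξ i)) := integral_prod _ hgint
      _ ≤ ∫ x, G x ∂(μ.map (ξ i)) := by
          refine integral_mono_of_nonneg ?_ hGint ?_
          · exact Filter.Eventually.of_forall fun x =>
              integral_nonneg fun w => by positivity
          · exact Filter.Eventually.of_forall hib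
      _ = ∫ ω, G (ξ i ω) ∂μ :=
          integral_map (hmeas i).aemeasurable hGmeas.aestronglyMeasurable
  -- pointwise AM-GM for the cross term
  have hQ0 : Q 0 = 0 := by
    rw [hQsum]
    refine Finset.sum_eq_zero fun u _ => ?_
    simp
  have hcross : ∀ (x : EuclideanSpace ℝ (Fin d)),
      Real.sqrt (Q x * Sf x) ≤ (Q x * ‖x‖ ^ 2 + Sf x / ‖x‖ ^ 2) / 2 := by
    intro x
    by_cases hx : x = 0
    · subst hx
      rw [hQ0, zero_mul, Real.sqrt_zero, zero_mul]
      have h1 : 0 ≤ Sf 0 / ‖(0 : EuclideanSpace ℝ (Fin d))‖ ^ 2 :=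
        div_nonneg (hSfnn 0) (by positivity)
      linarith
    · have hxn : 0 < ‖x‖ ^ 2 := by
        have := norm_pos_iff.mpr hx
        positivity
      have hab : Q x * ‖x‖ ^ 2 * (Sf x / ‖x‖ ^ 2) = Q x * Sf x := by
        have h2 : Q x * ‖x‖ ^ 2 * (Sf x / ‖x‖ ^ 2) =
            Q x * Sf x * (‖x‖ ^ 2 / ‖x‖ ^ 2) := by ring
        rw [h2, div_self hxn.ne', mul_one]
      have h := sqrt_mul_le_half (mul_nonneg (hQnn x) hxn.le)
        (div_nonneg (hSfnn x) hxn.le)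
      rwa [hab] at h
  -- integrability of the composed functions
  have hQxi : ∀ u, Integrable (fun ω => Q (ξ u ω) * ‖ξ u ω‖ ^ 2) μ := by
    intro u
    refine Integrable.mono' ((hmom u).const_mul (hsNorm Em))
      ((hQmeasf.comp (hmeas u)).mul ((hmeas u).norm.pow_const 2)).aestronglyMeasurable ?_
    filter_upwards with ω
    rw [Real.norm_eq_abs, abs_of_nonneg (mul_nonneg (hQnn _) (by positivity))]
    calc Q (ξ u ω) * ‖ξ u ω‖ ^ 2 ≤ (hsNorm Em * ‖ξ u ω‖ ^ 2) * ‖ξ u ω‖ ^ 2 :=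
          mul_le_mul_of_nonneg_right (hQle _) (by positivity)
      _ = hsNorm Em * ‖ξ u ω‖ ^ 4 := by ring
  have hnorm24 : ∀ (x : EuclideanSpace ℝ (Fin d)), ‖x‖ ^ 2 ≤ 1 + ‖x‖ ^ 4 := by
    intro x
    have h := abs_pow_le_one_add_pow_four (‖x‖) (by norm_num : 2 ≤ 4)
    rwa [abs_of_nonneg (norm_nonneg x)] at h
  have hSdivle : ∀ (x : EuclideanSpace ℝ (Fin d)), Sf x / ‖x‖ ^ 2 ≤ Bt * ‖x‖ ^ 2 := by
    intro x
    by_cases hx : x = 0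
    · subst hx
      simp only [norm_zero]
      norm_num
    · have hxn : 0 < ‖x‖ ^ 2 := by
        have := norm_pos_iff.mpr hx
        positivity
      rw [div_le_iff₀ hxn]
      calc Sf x ≤ Bt * ‖x‖ ^ 4 := hSfle x
        _ = Bt * ‖x‖ ^ 2 * ‖x‖ ^ 2 := by ring
  have hSdiv : ∀ u, Integrable (fun ω => Sf (ξ u ω) / ‖ξ u ω‖ ^ 2) μ := by
    intro u
    refine Integrable.mono' (((integrable_const 1).add (hmom u)).const_mul Bt)
      ((hSfmeasf.comp (hmeas u)).div ((hmeas u).norm.pow_const 2)).aestronglyMeasurable ?_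
    filter_upwards with ω
    rw [Real.norm_eq_abs, abs_of_nonneg (div_nonneg (hSfnn _) (by positivity))]
    calc Sf (ξ u ω) / ‖ξ u ω‖ ^ 2 ≤ Bt * ‖ξ u ω‖ ^ 2 := hSdivle _
      _ ≤ Bt * (1 + ‖ξ u ω‖ ^ 4) :=
          mul_le_mul_of_nonneg_left (hnorm24 _) hBtnn
  -- the auxiliary function hf and its coordinate expansion
  have hip22int : ∀ (x : EuclideanSpace ℝ (Fin d)) (u : Fin n),
      Integrable (fun ω => ⟪x, ξ u ω⟫ ^ 2 * ‖ξ u ω‖ ^ 2) μ := by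
    intro x u
    refine Integrable.mono' ((hmom u).const_mul (‖x‖ ^ 2))
      (((((innerSL ℝ x).continuous.measurable.comp (hmeas u)).pow_const 2).mul
        ((hmeas u).norm.pow_const 2)).aestronglyMeasurable) ?_
    filter_upwards with ω
    have h := abs_real_inner_le_norm x (ξ u ω)
    have h2 : ⟪x, ξ u ω⟫ ^ 2 ≤ ‖x‖ ^ 2 * ‖ξ u ω‖ ^ 2 := by
      nlinarith [sq_abs (⟪x, ξ u ω⟫ : ℝ), abs_nonneg (⟪x, ξ u ω⟫ : ℝ),
        norm_nonneg x, norm_nonneg (ξ u ω)]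
    rw [Real.norm_eq_abs, abs_of_nonneg (mul_nonneg (sq_nonneg _) (by positivity))]
    calc ⟪x, ξ u ω⟫ ^ 2 * ‖ξ u ω‖ ^ 2 ≤ (‖x‖ ^ 2 * ‖ξ u ω‖ ^ 2) * ‖ξ u ω‖ ^ 2 :=
          mul_le_mul_of_nonneg_right h2 (by positivity)
      _ = ‖x‖ ^ 2 * ‖ξ u ω‖ ^ 4 := by ring
  set hf : EuclideanSpace ℝ (Fin d) → ℝ :=
    fun x => ∑ u, ∫ ω, ⟪x, ξ u ω⟫ ^ 2 * ‖ξ u ω‖ ^ 2 ∂μ with hhf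
  have hhfnn : ∀ x, 0 ≤ hf x := fun x =>
    Finset.sum_nonneg fun u _ => integral_nonneg fun ω =>
      mul_nonneg (sq_nonneg _) (by positivity)
  have hSdivle2 : ∀ (x : EuclideanSpace ℝ (Fin d)), Sf x / ‖x‖ ^ 2 ≤ hf x := by
    intro x
    by_cases hx : x = 0
    · subst hx
      simp only [norm_zero]
      norm_num
      exact hhfnn 0
    · have hxn : 0 < ‖x‖ ^ 2 := by
        have := norm_pos_iff.mpr hx
        positivity
      rw [div_le_iff₀ hxn, hSf, hhf, Finset.sum_mul]
      refine Finset.sum_le_sum fun u _ => ?_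
      rw [← integral_mul_const]
      refine integral_mono (hip4int x u) ((hip22int x u).mul_const _) fun ω => ?_
      have h := abs_real_inner_le_norm x (ξ u ω)
      have h2 : ⟪x, ξ u ω⟫ ^ 2 ≤ ‖x‖ ^ 2 * ‖ξ u ω‖ ^ 2 := by
        nlinarith [sq_abs (⟪x, ξ u ω⟫ : ℝ), abs_nonneg (⟪x, ξ u ω⟫ : ℝ),
          norm_nonneg x, norm_nonneg (ξ u ω)]
      calc ⟪x, ξ u ω⟫ ^ 4 = ⟪x, ξ u ω⟫ ^ 2 * ⟪x, ξ u ω⟫ ^ 2 := by ring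
        _ ≤ ⟪x, ξ u ω⟫ ^ 2 * (‖x‖ ^ 2 * ‖ξ u ω‖ ^ 2) :=
            mul_le_mul_of_nonneg_left h2 (sq_nonneg _)
        _ = ⟪x, ξ u ω⟫ ^ 2 * ‖ξ u ω‖ ^ 2 * ‖x‖ ^ 2 := by ring
  have hquadint : ∀ (u : Fin n) (j k : Fin d),
      Integrable (fun ω => (ξ u ω j * ξ u ω k) * ‖ξ u ω‖ ^ 2) μ := by
    intro u j k
    refine Integrable.mono' ((integrable_const 1).add (hmom u))
      (((hcoordmeas u j).mul (hcoordmeas u k)).mul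
        ((hmeas u).norm.pow_const 2)).aestronglyMeasurable ?_
    filter_upwards with ω
    have h1 := hcoordabs (ξ u ω) j
    have h2 := hcoordabs (ξ u ω) k
    have h3 := abs_pow_le_one_add_pow_four (‖ξ u ω‖) (by norm_num : 4 ≤ 4)
    rw [abs_of_nonneg (norm_nonneg _)] at h3
    have he : ‖ξ u ω j * ξ u ω k * ‖ξ u ω‖ ^ 2‖ =
        |ξ u ω j| * |ξ u ω k| * ‖ξ u ω‖ ^ 2 := by
      rw [Real.norm_eq_abs, abs_mul, abs_mul, abs_of_nonneg (sq_nonneg (‖ξ u ω‖))]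
    rw [he]
    show |ξ u ω j| * |ξ u ω k| * ‖ξ u ω‖ ^ 2 ≤ 1 + ‖ξ u ω‖ ^ 4
    calc |ξ u ω j| * |ξ u ω k| * ‖ξ u ω‖ ^ 2
        ≤ (‖ξ u ω‖ * ‖ξ u ω‖) * ‖ξ u ω‖ ^ 2 :=
          mul_le_mul_of_nonneg_right
            (mul_le_mul h1 h2 (abs_nonneg _) (norm_nonneg _)) (sq_nonneg _)
      _ = ‖ξ u ω‖ ^ 4 := by ring
      _ ≤ 1 + ‖ξ u ω‖ ^ 4 := by linarith
  have hfexp : ∀ (x : EuclideanSpace ℝ (Fin d)), hf x =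
      ∑ u, ∑ j, ∑ k, (x j * x k) *
        ∫ ω, (ξ u ω j * ξ u ω k) * ‖ξ u ω‖ ^ 2 ∂μ := by
    intro x
    rw [hhf]
    refine Finset.sum_congr rfl fun u _ => ?_
    have he : (fun ω => ⟪x, ξ u ω⟫ ^ 2 * ‖ξ u ω‖ ^ 2) =
        fun ω => ∑ j, ∑ k, (x j * x k) * ((ξ u ω j * ξ u ω k) * ‖ξ u ω‖ ^ 2) := by
      funext ω
      rw [hinner2 x u ω, Finset.sum_mul]
      refine Finset.sum_congr rfl fun j _ => ?_
      rw [Finset.sum_mul]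
      exact Finset.sum_congr rfl fun k _ => by ring
    rw [he, integral_finset_sum _ fun j _ =>
      integrable_finset_sum _ fun k _ => (hquadint u j k).const_mul _]
    refine Finset.sum_congr rfl fun j _ => ?_
    rw [integral_finset_sum _ fun k _ => (hquadint u j k).const_mul _]
    exact Finset.sum_congr rfl fun k _ => integral_const_mul _ _
  have hfcomp_eq : ∀ i, (fun ω => hf (ξ i ω)) =
      fun ω => ∑ u, ∑ j, ∑ k, (ξ i ω j * ξ i ω k) *
        ∫ ω', (ξ u ω' j * ξ u ω' k) * ‖ξ u ω'‖ ^ 2 ∂μ :=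
    fun i => funext fun ω => hfexp (ξ i ω)
  have hfcompint : ∀ i, Integrable (fun ω => hf (ξ i ω)) μ := by
    intro i
    rw [hfcomp_eq i]
    exact integrable_finset_sum _ fun u _ => integrable_finset_sum _ fun j _ =>
      integrable_finset_sum _ fun k _ => (hpairint i i j k).mul_const _
  have hfint_eq : ∀ i, (∫ ω, hf (ξ i ω) ∂μ) =
      ∑ u, ∑ j, ∑ k, (∫ ω, ξ i ω j * ξ i ω k ∂μ) *
        ∫ ω, (ξ u ω j * ξ u ω k) * ‖ξ u ω‖ ^ 2 ∂μ := by
    intro i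
    rw [hfcomp_eq i, integral_finset_sum _ fun u _ => integrable_finset_sum _ fun j _ =>
      integrable_finset_sum _ fun k _ => (hpairint i i j k).mul_const _]
    refine Finset.sum_congr rfl fun u _ => ?_
    rw [integral_finset_sum _ fun j _ =>
      integrable_finset_sum _ fun k _ => (hpairint i i j k).mul_const _]
    refine Finset.sum_congr rfl fun j _ => ?_
    rw [integral_finset_sum _ fun k _ => (hpairint i i j k).mul_const _]
    exact Finset.sum_congr rfl fun k _ => integral_mul_const _ _
  -- sum over i of ∫ hf (ξ i) equals the P-sum
  have hPsum : (∑ i, ∫ ω, hf (ξ i ω) ∂μ) =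
      ∑ u, ∫ ω, Q (ξ u ω) * ‖ξ u ω‖ ^ 2 ∂μ := by
    calc (∑ i, ∫ ω, hf (ξ i ω) ∂μ)
        = ∑ i, ∑ u, ∑ j, ∑ k, (∫ ω, ξ i ω j * ξ i ω k ∂μ) *
            ∫ ω, (ξ u ω j * ξ u ω k) * ‖ξ u ω‖ ^ 2 ∂μ :=
          Finset.sum_congr rfl fun i _ => hfint_eq i
      _ = ∑ u, ∑ i, ∑ j, ∑ k, (∫ ω, ξ i ω j * ξ i ω k ∂μ) *
            ∫ ω, (ξ u ω j * ξ u ω k) * ‖ξ u ω‖ ^ 2 ∂μ := Finset.sum_comm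
      _ = ∑ u, ∑ j, ∑ k, Em j k * ∫ ω, (ξ u ω j * ξ u ω k) * ‖ξ u ω‖ ^ 2 ∂μ := by
          refine Finset.sum_congr rfl fun u _ => ?_
          calc (∑ i, ∑ j, ∑ k, (∫ ω, ξ i ω j * ξ i ω k ∂μ) *
                ∫ ω, (ξ u ω j * ξ u ω k) * ‖ξ u ω‖ ^ 2 ∂μ)
              = ∑ j, ∑ i, ∑ k, (∫ ω, ξ i ω j * ξ i ω k ∂μ) *
                ∫ ω, (ξ u ω j * ξ u ω k) * ‖ξ u ω‖ ^ 2 ∂μ := Finset.sum_comm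
            _ = ∑ j, ∑ k, ∑ i, (∫ ω, ξ i ω j * ξ i ω k ∂μ) *
                ∫ ω, (ξ u ω j * ξ u ω k) * ‖ξ u ω‖ ^ 2 ∂μ :=
                Finset.sum_congr rfl fun j _ => Finset.sum_comm
            _ = ∑ j, ∑ k, Em j k * ∫ ω, (ξ u ω j * ξ u ω k) * ‖ξ u ω‖ ^ 2 ∂μ := by
                refine Finset.sum_congr rfl fun j _ => Finset.sum_congr rfl fun k _ => ?_
                rw [← Finset.sum_mul, ← hcov j k]
      _ = ∑ u, ∫ ω, Q (ξ u ω) * ‖ξ u ω‖ ^ 2 ∂μ := by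
          refine Finset.sum_congr rfl fun u _ => ?_
          have he2 : (fun ω => Q (ξ u ω) * ‖ξ u ω‖ ^ 2) =
              fun ω => ∑ j, ∑ k, Em j k * ((ξ u ω j * ξ u ω k) * ‖ξ u ω‖ ^ 2) := by
            funext ω
            have hq : Q (ξ u ω) = ∑ j, ∑ k, Em j k * (ξ u ω j * ξ u ω k) := by
              simp only [hQ]
            rw [hq, Finset.sum_mul]
            refine Finset.sum_congr rfl fun j _ => ?_
            rw [Finset.sum_mul]
            exact Finset.sum_congr rfl fun k _ => by ring
          erw [he2, integral_finset_sum _ fun j _ =>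
            integrable_finset_sum _ fun k _ => (hquadint u j k).const_mul _]
          refine (Finset.sum_congr rfl fun j _ => ?_).symm
          erw [integral_finset_sum _ fun k _ => (hquadint u j k).const_mul _]
          exact Finset.sum_congr rfl fun k _ => integral_const_mul _ _
  have hPle : ∀ u, (∫ ω, Q (ξ u ω) * ‖ξ u ω‖ ^ 2 ∂μ) ≤
      hsNorm Em * ∫ ω, ‖ξ u ω‖ ^ 4 ∂μ := by
    intro u
    rw [← integral_const_mul]
    refine integral_mono_of_nonneg
      (Filter.Eventually.of_forall fun ω => mul_nonneg (hQnn _) (by positivity))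
      ((hmom u).const_mul _) (Filter.Eventually.of_forall fun ω => ?_)
    calc Q (ξ u ω) * ‖ξ u ω‖ ^ 2 ≤ (hsNorm Em * ‖ξ u ω‖ ^ 2) * ‖ξ u ω‖ ^ 2 :=
          mul_le_mul_of_nonneg_right (hQle _) (by positivity)
      _ = hsNorm Em * ‖ξ u ω‖ ^ 4 := by ring
  -- split of ∫ G (ξ i)
  have hsqrtQQint : ∀ i, Integrable (fun ω => Real.sqrt (Q (ξ i ω)) * Q (ξ i ω)) μ := by
    intro i
    refine Integrable.mono' (((integrable_const 1).add (hmom i)).const_mul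
      (Real.sqrt (hsNorm Em) * hsNorm Em))
      (((Real.continuous_sqrt.measurable.comp (hQmeasf.comp (hmeas i))).mul
        (hQmeasf.comp (hmeas i))).aestronglyMeasurable) ?_
    filter_upwards with ω
    rw [Real.norm_eq_abs, abs_of_nonneg (mul_nonneg (Real.sqrt_nonneg _) (hQnn _))]
    have b1 : Real.sqrt (Q (ξ i ω)) ≤ Real.sqrt (hsNorm Em) * ‖ξ i ω‖ := by
      have h := Real.sqrt_le_sqrt (hQle (ξ i ω))
      rwa [Real.sqrt_mul hEmnn, Real.sqrt_sq (norm_nonneg _)] at h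
    have hx3 : ‖ξ i ω‖ ^ 3 ≤ 1 + ‖ξ i ω‖ ^ 4 := by
      have h := abs_pow_le_one_add_pow_four (‖ξ i ω‖) (by norm_num : 3 ≤ 4)
      rwa [abs_of_nonneg (norm_nonneg _)] at h
    calc Real.sqrt (Q (ξ i ω)) * Q (ξ i ω)
        ≤ (Real.sqrt (hsNorm Em) * ‖ξ i ω‖) * (hsNorm Em * ‖ξ i ω‖ ^ 2) :=
          mul_le_mul b1 (hQle _) (hQnn _) (by positivity)
      _ = Real.sqrt (hsNorm Em) * hsNorm Em * ‖ξ i ω‖ ^ 3 := by ring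
      _ ≤ Real.sqrt (hsNorm Em) * hsNorm Em * (1 + ‖ξ i ω‖ ^ 4) :=
          mul_le_mul_of_nonneg_left hx3
            (mul_nonneg (Real.sqrt_nonneg _) hEmnn)
  have hsqrtQSint : ∀ i, Integrable (fun ω => Real.sqrt (Q (ξ i ω) * Sf (ξ i ω))) μ := by
    intro i
    refine Integrable.mono' (((integrable_const 1).add (hmom i)).const_mul
      (Real.sqrt (hsNorm Em * Bt)))
      ((Real.continuous_sqrt.measurable.comp
        ((hQmeasf.comp (hmeas i)).mul (hSfmeasf.comp (hmeas i)))).aestronglyMeasurable) ?_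
    filter_upwards with ω
    rw [Real.norm_eq_abs, abs_of_nonneg (Real.sqrt_nonneg _)]
    have h1 : Q (ξ i ω) * Sf (ξ i ω) ≤ (hsNorm Em * Bt) * (‖ξ i ω‖ ^ 3) ^ 2 := by
      calc Q (ξ i ω) * Sf (ξ i ω) ≤ (hsNorm Em * ‖ξ i ω‖ ^ 2) * (Bt * ‖ξ i ω‖ ^ 4) :=
            mul_le_mul (hQle _) (hSfle _) (hSfnn _) (by positivity)
        _ = (hsNorm Em * Bt) * (‖ξ i ω‖ ^ 3) ^ 2 := by ring
    have hx3 : ‖ξ i ω‖ ^ 3 ≤ 1 + ‖ξ i ω‖ ^ 4 := by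
      have h := abs_pow_le_one_add_pow_four (‖ξ i ω‖) (by norm_num : 3 ≤ 4)
      rwa [abs_of_nonneg (norm_nonneg _)] at h
    calc Real.sqrt (Q (ξ i ω) * Sf (ξ i ω))
        ≤ Real.sqrt ((hsNorm Em * Bt) * (‖ξ i ω‖ ^ 3) ^ 2) := Real.sqrt_le_sqrt h1
      _ = Real.sqrt (hsNorm Em * Bt) * ‖ξ i ω‖ ^ 3 := by
          rw [Real.sqrt_mul (mul_nonneg hEmnn hBtnn), Real.sqrt_sq (by positivity)]
      _ ≤ Real.sqrt (hsNorm Em * Bt) * (1 + ‖ξ i ω‖ ^ 4) :=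
          mul_le_mul_of_nonneg_left hx3 (Real.sqrt_nonneg _)
  have hGsplit : ∀ i, (∫ ω, G (ξ i ω) ∂μ) =
      Real.sqrt 3 * (∫ ω, Real.sqrt (Q (ξ i ω)) * Q (ξ i ω) ∂μ) +
        ∫ ω, Real.sqrt (Q (ξ i ω) * Sf (ξ i ω)) ∂μ := by
    intro i
    have he : (fun ω => G (ξ i ω)) = fun ω =>
        Real.sqrt 3 * (Real.sqrt (Q (ξ i ω)) * Q (ξ i ω)) +
          Real.sqrt (Q (ξ i ω) * Sf (ξ i ω)) := by
      funext ω; simp only [hG]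
    rw [he, integral_add ((hsqrtQQint i).const_mul _) (hsqrtQSint i), integral_const_mul]
  have hrpow : ∀ i, (∫ ω, ⟪ξ i ω, mulVecE Em (ξ i ω)⟫ ^ ((3:ℝ)/2) ∂μ)
      = ∫ ω, Real.sqrt (Q (ξ i ω)) * Q (ξ i ω) ∂μ := by
    intro i
    refine integral_congr_ae (Filter.Eventually.of_forall fun ω => ?_)
    have h1 : ⟪ξ i ω, mulVecE Em (ξ i ω)⟫ = Q (ξ i ω) := by
      rw [inner_mulVecE]
    show ⟪ξ i ω, mulVecE Em (ξ i ω)⟫ ^ ((3:ℝ)/2) = Real.sqrt (Q (ξ i ω)) * Q (ξ i ω)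
    rw [h1, rpow_three_halves (hQnn _)]
  have hcrossint : ∀ i, (∫ ω, Real.sqrt (Q (ξ i ω) * Sf (ξ i ω)) ∂μ) ≤
      ((∫ ω, Q (ξ i ω) * ‖ξ i ω‖ ^ 2 ∂μ) + ∫ ω, Sf (ξ i ω) / ‖ξ i ω‖ ^ 2 ∂μ) / 2 := by
    intro i
    rw [← integral_add (hQxi i) (hSdiv i), ← integral_div]
    exact integral_mono_of_nonneg
      (Filter.Eventually.of_forall fun ω => Real.sqrt_nonneg _)
      (((hQxi i).add (hSdiv i)).div_const 2)
      (Filter.Eventually.of_forall fun ω => hcross (ξ i ω))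
  have hRle : ∀ i, (∫ ω, Sf (ξ i ω) / ‖ξ i ω‖ ^ 2 ∂μ) ≤ ∫ ω, hf (ξ i ω) ∂μ := by
    intro i
    exact integral_mono_of_nonneg
      (Filter.Eventually.of_forall fun ω => div_nonneg (hSfnn _) (by positivity))
      (hfcompint i)
      (Filter.Eventually.of_forall fun ω => hSdivle2 (ξ i ω))
  -- final assembly
  have hWi_rw : ∀ (i : Fin n) (ω : Ω),
      (∑ u, ξ u ω) - ξ i ω = ∑ u ∈ Finset.univ.erase i, ξ u ω := by
    intro i ω
    rw [sub_eq_iff_eq_add]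
    exact (Finset.sum_erase_add _ _ (Finset.mem_univ i)).symm
  have hLHS : (∑ i, ∫ ω, |⟪ξ i ω, (∑ u, ξ u ω) - ξ i ω⟫| ^ 3 ∂μ)
      = ∑ i, ∫ ω, |⟪ξ i ω, ∑ u ∈ Finset.univ.erase i, ξ u ω⟫| ^ 3 ∂μ :=
    Finset.sum_congr rfl fun i _ => by
      refine integral_congr_ae (Filter.Eventually.of_forall fun ω => ?_)
      show |⟪ξ i ω, (∑ u, ξ u ω) - ξ i ω⟫| ^ 3 =
        |⟪ξ i ω, ∑ u ∈ Finset.univ.erase i, ξ u ω⟫| ^ 3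
      rw [hWi_rw i ω]
  have hPnn : ∀ u, 0 ≤ ∫ ω, Q (ξ u ω) * ‖ξ u ω‖ ^ 2 ∂μ :=
    fun u => integral_nonneg fun ω => mul_nonneg (hQnn _) (by positivity)
  have hfinal1 : (∑ i, ∫ ω, Real.sqrt (Q (ξ i ω) * Sf (ξ i ω)) ∂μ) ≤
      hsNorm Em * Bt := by
    have h1 : (∑ i, ∫ ω, Real.sqrt (Q (ξ i ω) * Sf (ξ i ω)) ∂μ) ≤
        ∑ i, ((∫ ω, Q (ξ i ω) * ‖ξ i ω‖ ^ 2 ∂μ) +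
          ∫ ω, Sf (ξ i ω) / ‖ξ i ω‖ ^ 2 ∂μ) / 2 :=
      Finset.sum_le_sum fun i _ => hcrossint i
    have h2 : (∑ i, ((∫ ω, Q (ξ i ω) * ‖ξ i ω‖ ^ 2 ∂μ) +
        ∫ ω, Sf (ξ i ω) / ‖ξ i ω‖ ^ 2 ∂μ) / 2) ≤
        ∑ i, ((∫ ω, Q (ξ i ω) * ‖ξ i ω‖ ^ 2 ∂μ) + ∫ ω, hf (ξ i ω) ∂μ) / 2 :=
      Finset.sum_le_sum fun i _ => by
        have := hRle i
        linarith
    have h3 : (∑ i, ((∫ ω, Q (ξ i ω) * ‖ξ i ω‖ ^ 2 ∂μ) + ∫ ω, hf (ξ i ω) ∂μ) / 2) =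
        ∑ u, ∫ ω, Q (ξ u ω) * ‖ξ u ω‖ ^ 2 ∂μ := by
      rw [← Finset.sum_div, Finset.sum_add_distrib, hPsum]
      ring
    have h4 : (∑ u, ∫ ω, Q (ξ u ω) * ‖ξ u ω‖ ^ 2 ∂μ) ≤ hsNorm Em * Bt := by
      rw [hBt, Finset.mul_sum]
      exact Finset.sum_le_sum fun u _ => hPle u
    linarith
  rw [hLHS]
  have hstep1 : (∑ i, ∫ ω, |⟪ξ i ω, ∑ u ∈ Finset.univ.erase i, ξ u ω⟫| ^ 3 ∂μ) ≤
      ∑ i, ∫ ω, G (ξ i ω) ∂μ :=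
    Finset.sum_le_sum fun i _ => hdec i
  have hstep2 : (∑ i, ∫ ω, G (ξ i ω) ∂μ) =
      Real.sqrt 3 * (∑ i, ∫ ω, Real.sqrt (Q (ξ i ω)) * Q (ξ i ω) ∂μ) +
        ∑ i, ∫ ω, Real.sqrt (Q (ξ i ω) * Sf (ξ i ω)) ∂μ := by
    rw [Finset.sum_congr rfl fun i _ => hGsplit i, Finset.sum_add_distrib, Finset.mul_sum]
  have hstep3 : (∑ i, ∫ ω, ⟪ξ i ω, mulVecE Em (ξ i ω)⟫ ^ ((3:ℝ)/2) ∂μ)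
      = ∑ i, ∫ ω, Real.sqrt (Q (ξ i ω)) * Q (ξ i ω) ∂μ :=
    Finset.sum_congr rfl fun i _ => hrpow i
  calc (∑ i, ∫ ω, |⟪ξ i ω, ∑ u ∈ Finset.univ.erase i, ξ u ω⟫| ^ 3 ∂μ)
      ≤ ∑ i, ∫ ω, G (ξ i ω) ∂μ := hstep1
    _ = Real.sqrt 3 * (∑ i, ∫ ω, Real.sqrt (Q (ξ i ω)) * Q (ξ i ω) ∂μ) +
        ∑ i, ∫ ω, Real.sqrt (Q (ξ i ω) * Sf (ξ i ω)) ∂μ := hstep2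
    _ ≤ Real.sqrt 3 * (∑ i, ∫ ω, Real.sqrt (Q (ξ i ω)) * Q (ξ i ω) ∂μ) +
        hsNorm Em * Bt := by linarith [hfinal1]
    _ = hsNorm Em * Bt + Real.sqrt 3 *
        ∑ i, ∫ ω, ⟪ξ i ω, mulVecE Em (ξ i ω)⟫ ^ ((3:ℝ)/2) ∂μ := by
        rw [← hstep3]; ring


end Paper
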